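/- Let p ∈ [1,∞) be a real number, k ∈ ℕ with p ≤ k, and let ℓ_p denote the complex Banach space ℓ_p(ℕ, ℂ). Define Q : ℓ_p → ℂ by Q(x) := Σ_{n=1}^∞ [(1 − 1/n) x_n^k + (1 + 1/n) x_n^{k+1}] (the series converges absolutely for every x ∈ ℓ_p). Then: (1) sup_{‖x‖_p ≤ 1} |Q(x)| = 2, and |Q(e_1)| = 2 where e_1 is the first canonical unit vector, so Q attains its supremum norm; (2) for every s ∈ (0,1), sup_{‖x‖_p ≤ s} |Q(x)| = s^k + s^{k+1} while |Q(x)| < s^k + s^{k+1} for every x with ‖x‖_p ≤ s, so Q does not attain its s-norm for any s ∈ (0,1); (3) Q does not attain its v-norm: for every x with ‖x‖_p ≤ 1 one has (1 − ‖x‖_p²)|Q(x)| < sup_{‖y‖_p < 1} (1 − ‖y‖_p²)|Q(y)|. -/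

import Mathlib

open Filter Topology Metric

/-- The weighted ("v-") norm: `sup_{‖x‖<1} (1 - ‖x‖²)‖f x‖`. -/
noncomputable def vNorm {X Y : Type*} [NormedAddCommGroup X] [NormedAddCommGroup Y]
    (f : X → Y) : ℝ :=
  sSup ((fun x => (1 - ‖x‖ ^ 2) * ‖f x‖) '' {x : X | ‖x‖ < 1})

/-- The `s`-norm: `sup_{‖x‖<1} ‖f (s • x)‖`. -/
noncomputable def sNorm {X Y : Type*} [NormedAddCommGroup X] [NormedSpace ℂ X]
    [NormedAddCommGroup Y] (s : ℝ) (f : X → Y) : ℝ :=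
  sSup ((fun x => ‖f ((s : ℂ) • x)‖) '' {x : X | ‖x‖ < 1})

/-- The supremum norm over the open unit ball. -/
noncomputable def supNorm {X Y : Type*} [NormedAddCommGroup X] [NormedAddCommGroup Y]
    (f : X → Y) : ℝ :=
  sSup ((fun x => ‖f x‖) '' {x : X | ‖x‖ < 1})

/-- `P` is a continuous `N`-homogeneous polynomial: `P x = A(x, …, x)` for a continuous
`N`-linear map `A`. -/
def IsHomPoly {X Y : Type*} [NormedAddCommGroup X] [NormedSpace ℂ X]
    [NormedAddCommGroup Y] [NormedSpace ℂ Y] (N : ℕ) (P : X → Y) : Prop :=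
  ∃ A : ContinuousMultilinearMap ℂ (fun _ : Fin N => X) Y, ∀ x, P x = A (fun _ => x)

/-- `P` is a polynomial of degree at most `N`: a sum of continuous `k`-homogeneous
polynomials for `k = 0, …, N`. -/
def IsPolyDeg {X Y : Type*} [NormedAddCommGroup X] [NormedSpace ℂ X]
    [NormedAddCommGroup Y] [NormedSpace ℂ Y] (N : ℕ) (P : X → Y) : Prop :=
  ∃ Pk : ℕ → X → Y, (∀ k, k ≤ N → IsHomPoly k (Pk k)) ∧
    ∀ x, P x = ∑ k ∈ Finset.range (N + 1), Pk k x

/-- `f` attains its `s`-norm. -/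
def AttainsS {X Y : Type*} [NormedAddCommGroup X] [NormedSpace ℂ X]
    [NormedAddCommGroup Y] (s : ℝ) (f : X → Y) : Prop :=
  ∃ x₀ : X, ‖x₀‖ ≤ s ∧ ‖f x₀‖ = sNorm s f

/-- `f` attains its `v`-norm. -/
def AttainsV {X Y : Type*} [NormedAddCommGroup X] [NormedAddCommGroup Y]
    (f : X → Y) : Prop :=
  ∃ x₀ : X, ‖x₀‖ ≤ 1 ∧ (1 - ‖x₀‖ ^ 2) * ‖f x₀‖ = vNorm f

open scoped ENNReal

/-- The polynomial `Q(x) = ∑_{n≥1} (1 - 1/n) x_n^k + (1 + 1/n) x_n^{k+1}` on `ℓ_p`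
(indexed here by `n : ℕ` with coefficients `1 ∓ 1/(n+1)`). -/
noncomputable def Qpoly (p : ℝ≥0∞) (k : ℕ) (x : lp (fun _ : ℕ => ℂ) p) : ℂ :=
  ∑' n : ℕ, ((1 - 1 / ((n : ℂ) + 1)) * (x n) ^ k + (1 + 1 / ((n : ℂ) + 1)) * (x n) ^ (k + 1))

section Stmt10Aux

variable {p : ℝ≥0∞} [Fact (1 ≤ p)]

private lemma hp_ne_zero : p ≠ 0 :=
  (lt_of_lt_of_le zero_lt_one (Fact.out : 1 ≤ p)).ne'

private lemma hpr_pos (hp : p ≠ ⊤) : 0 < p.toReal :=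
  ENNReal.toReal_pos hp_ne_zero hp

private lemma eps_pos (n : ℕ) : 0 < 1 / ((n : ℝ) + 1) := by positivity

private lemma eps_le_one (n : ℕ) : 1 / ((n : ℝ) + 1) ≤ 1 := by
  rw [div_le_one (by positivity)]
  have : (0 : ℝ) ≤ (n : ℝ) := Nat.cast_nonneg n
  linarith

private lemma sum_pow_le (hp : p ≠ ⊤) {m : ℕ} (hm : p.toReal ≤ (m : ℝ))
    (x : lp (fun _ : ℕ => ℂ) p) :
    Summable (fun n => ‖x n‖ ^ m) ∧ ∑' n, ‖x n‖ ^ m ≤ ‖x‖ ^ m := by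
  have hpr := hpr_pos (p := p) hp
  have hx : HasSum (fun n => ‖x n‖ ^ p.toReal) (‖x‖ ^ p.toReal) := lp.hasSum_norm hpr x
  have hxn : (0 : ℝ) ≤ ‖x‖ := norm_nonneg x
  have key : ∀ n, ‖x n‖ ^ m ≤ ‖x n‖ ^ p.toReal * ‖x‖ ^ ((m : ℝ) - p.toReal) := by
    intro n
    have h1 : ‖x n‖ ≤ ‖x‖ := lp.norm_apply_le_norm (hp_ne_zero (p := p)) x n
    calc ‖x n‖ ^ m = ‖x n‖ ^ ((m : ℝ)) := (Real.rpow_natCast _ m).symm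
      _ = ‖x n‖ ^ p.toReal * ‖x n‖ ^ ((m : ℝ) - p.toReal) := by
          rw [← Real.rpow_add_of_nonneg (norm_nonneg _) hpr.le (by linarith)]
          congr 1; ring
      _ ≤ ‖x n‖ ^ p.toReal * ‖x‖ ^ ((m : ℝ) - p.toReal) :=
          mul_le_mul_of_nonneg_left
            (Real.rpow_le_rpow (norm_nonneg _) h1 (by linarith))
            (Real.rpow_nonneg (norm_nonneg _) _)
  have hsum : Summable (fun n => ‖x n‖ ^ m) :=
    Summable.of_nonneg_of_le (fun n => pow_nonneg (norm_nonneg _) m) key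
      (hx.summable.mul_right _)
  refine ⟨hsum, ?_⟩
  calc ∑' n, ‖x n‖ ^ m ≤ ∑' n, ‖x n‖ ^ p.toReal * ‖x‖ ^ ((m : ℝ) - p.toReal) :=
        Summable.tsum_le_tsum key hsum (hx.summable.mul_right _)
    _ = (‖x‖ ^ p.toReal) * ‖x‖ ^ ((m : ℝ) - p.toReal) := by
        rw [tsum_mul_right, hx.tsum_eq]
    _ = ‖x‖ ^ ((m : ℝ)) := by
        rw [← Real.rpow_add_of_nonneg hxn hpr.le (by linarith)]
        congr 1; ring
    _ = ‖x‖ ^ m := Real.rpow_natCast _ m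

private lemma qterm_norm_le (k n : ℕ) (c : ℂ) :
    ‖(1 - 1 / ((n : ℂ) + 1)) * c ^ k + (1 + 1 / ((n : ℂ) + 1)) * c ^ (k + 1)‖ ≤
      (1 - 1 / ((n : ℝ) + 1)) * ‖c‖ ^ k + (1 + 1 / ((n : ℝ) + 1)) * ‖c‖ ^ (k + 1) := by
  have e1 : (1 - 1 / ((n : ℂ) + 1)) = (((1 - 1 / ((n : ℝ) + 1)) : ℝ) : ℂ) := by
    push_cast; ring
  have e2 : (1 + 1 / ((n : ℂ) + 1)) = (((1 + 1 / ((n : ℝ) + 1)) : ℝ) : ℂ) := by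
    push_cast; ring
  have h1 : (0 : ℝ) ≤ 1 - 1 / ((n : ℝ) + 1) := by linarith [eps_le_one n]
  have h2 : (0 : ℝ) ≤ 1 + 1 / ((n : ℝ) + 1) := by linarith [eps_pos n]
  calc ‖(1 - 1 / ((n : ℂ) + 1)) * c ^ k + (1 + 1 / ((n : ℂ) + 1)) * c ^ (k + 1)‖
      ≤ ‖(1 - 1 / ((n : ℂ) + 1)) * c ^ k‖ + ‖(1 + 1 / ((n : ℂ) + 1)) * c ^ (k + 1)‖ :=
        norm_add_le _ _
    _ = (1 - 1 / ((n : ℝ) + 1)) * ‖c‖ ^ k + (1 + 1 / ((n : ℝ) + 1)) * ‖c‖ ^ (k + 1) := by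
        rw [norm_mul, norm_mul, norm_pow, norm_pow, e1, e2, Complex.norm_real,
          Complex.norm_real, Real.norm_eq_abs, Real.norm_eq_abs, abs_of_nonneg h1,
          abs_of_nonneg h2]

private lemma weighted_le {t : ℝ} (k n : ℕ) (ht0 : 0 ≤ t) (ht1 : t ≤ 1) :
    (1 - 1 / ((n : ℝ) + 1)) * t ^ k + (1 + 1 / ((n : ℝ) + 1)) * t ^ (k + 1) ≤
      t ^ k + t ^ (k + 1) := by
  have h : t ^ (k + 1) ≤ t ^ k := pow_le_pow_of_le_one ht0 ht1 (Nat.le_succ k)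
  have h2 := mul_nonneg (eps_pos n).le (sub_nonneg.2 h)
  nlinarith

private lemma weighted_lt {t : ℝ} (k n : ℕ) (ht0 : 0 < t) (ht1 : t < 1) :
    (1 - 1 / ((n : ℝ) + 1)) * t ^ k + (1 + 1 / ((n : ℝ) + 1)) * t ^ (k + 1) <
      t ^ k + t ^ (k + 1) := by
  have h : t ^ (k + 1) < t ^ k := pow_lt_pow_right_of_lt_one₀ ht0 ht1 (Nat.lt_succ_self k)
  have h2 := mul_pos (eps_pos n) (sub_pos.2 h)
  nlinarith

private lemma weighted_le_two {t : ℝ} (k n : ℕ) (ht0 : 0 ≤ t) (ht1 : t ≤ 1) :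
    (1 - 1 / ((n : ℝ) + 1)) * t ^ k + (1 + 1 / ((n : ℝ) + 1)) * t ^ (k + 1) ≤
      2 * t ^ k := by
  have h : t ^ (k + 1) ≤ t ^ k := pow_le_pow_of_le_one ht0 ht1 (Nat.le_succ k)
  have h2 : (1 + 1 / ((n : ℝ) + 1)) * t ^ (k + 1) ≤ (1 + 1 / ((n : ℝ) + 1)) * t ^ k :=
    mul_le_mul_of_nonneg_left h (by linarith [eps_pos n])
  have h3 : (0 : ℝ) ≤ t ^ k := pow_nonneg ht0 k
  nlinarith [eps_pos n]

private lemma qsummable (hp : p ≠ ⊤) {k : ℕ} (hk : p.toReal ≤ (k : ℝ))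
    (x : lp (fun _ : ℕ => ℂ) p) :
    Summable (fun n : ℕ =>
      ‖(1 - 1 / ((n : ℂ) + 1)) * (x n) ^ k + (1 + 1 / ((n : ℂ) + 1)) * (x n) ^ (k + 1)‖) := by
  have hk1 : p.toReal ≤ ((k + 1 : ℕ) : ℝ) := by push_cast; linarith
  have A := (sum_pow_le hp hk x).1
  have B := (sum_pow_le hp hk1 x).1
  refine Summable.of_nonneg_of_le (fun n => norm_nonneg _) (fun n => ?_)
    ((A.mul_left 2).add (B.mul_left 2))
  refine le_trans (qterm_norm_le k n (x n)) ?_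
  have h1 : (1 - 1 / ((n : ℝ) + 1)) * ‖x n‖ ^ k ≤ 2 * ‖x n‖ ^ k :=
    mul_le_mul_of_nonneg_right (by linarith [eps_pos n]) (pow_nonneg (norm_nonneg _) _)
  have h2 : (1 + 1 / ((n : ℝ) + 1)) * ‖x n‖ ^ (k + 1) ≤ 2 * ‖x n‖ ^ (k + 1) :=
    mul_le_mul_of_nonneg_right (by linarith [eps_le_one n]) (pow_nonneg (norm_nonneg _) _)
  linarith

private lemma tsum_pow_bound (hp : p ≠ ⊤) {k : ℕ} (hk : p.toReal ≤ (k : ℝ))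
    (x : lp (fun _ : ℕ => ℂ) p) {s : ℝ} (hxs : ‖x‖ ≤ s) :
    ∑' n, (‖x n‖ ^ k + ‖x n‖ ^ (k + 1)) ≤ s ^ k + s ^ (k + 1) := by
  have hk1 : p.toReal ≤ ((k + 1 : ℕ) : ℝ) := by push_cast; linarith
  obtain ⟨A1, A2⟩ := sum_pow_le hp hk x
  obtain ⟨B1, B2⟩ := sum_pow_le hp hk1 x
  rw [Summable.tsum_add A1 B1]
  have hs0 : (0 : ℝ) ≤ s := le_trans (norm_nonneg x) hxs
  have e1 : ‖x‖ ^ k ≤ s ^ k := pow_le_pow_left₀ (norm_nonneg x) hxs k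
  have e2 : ‖x‖ ^ (k + 1) ≤ s ^ (k + 1) := pow_le_pow_left₀ (norm_nonneg x) hxs (k + 1)
  linarith

private lemma qnorm_le (hp : p ≠ ⊤) {k : ℕ} (hk : p.toReal ≤ (k : ℝ))
    (x : lp (fun _ : ℕ => ℂ) p) {s : ℝ} (hxs : ‖x‖ ≤ s) (hs1 : s ≤ 1) :
    ‖Qpoly p k x‖ ≤ s ^ k + s ^ (k + 1) := by
  have hk1 : p.toReal ≤ ((k + 1 : ℕ) : ℝ) := by push_cast; linarith
  have A := (sum_pow_le hp hk x).1
  have B := (sum_pow_le hp hk1 x).1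
  refine le_trans (norm_tsum_le_tsum_norm (qsummable hp hk x)) (le_trans ?_
    (tsum_pow_bound hp hk x hxs))
  refine Summable.tsum_le_tsum (fun n => ?_) (qsummable hp hk x) (A.add B)
  refine le_trans (qterm_norm_le k n (x n)) (weighted_le k n (norm_nonneg _) ?_)
  exact le_trans (lp.norm_apply_le_norm (hp_ne_zero (p := p)) x n) (le_trans hxs hs1)

private lemma qnorm_lt (hp : p ≠ ⊤) {k : ℕ} (hk : p.toReal ≤ (k : ℝ))
    (x : lp (fun _ : ℕ => ℂ) p) (hx0 : x ≠ 0) {s : ℝ} (hxs : ‖x‖ ≤ s) (hs1 : s < 1) :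
    ‖Qpoly p k x‖ < s ^ k + s ^ (k + 1) := by
  have hk1 : p.toReal ≤ ((k + 1 : ℕ) : ℝ) := by push_cast; linarith
  have A := (sum_pow_le hp hk x).1
  have B := (sum_pow_le hp hk1 x).1
  obtain ⟨n0, hn0⟩ : ∃ n, x n ≠ 0 := by
    by_contra h
    push_neg at h
    exact hx0 (Subtype.ext (funext fun n => h n))
  have hlt : ∑' n : ℕ, ‖(1 - 1 / ((n : ℂ) + 1)) * (x n) ^ k +
      (1 + 1 / ((n : ℂ) + 1)) * (x n) ^ (k + 1)‖ <
      ∑' n : ℕ, (‖x n‖ ^ k + ‖x n‖ ^ (k + 1)) := by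
    refine Summable.tsum_lt_tsum_of_nonneg (i := n0) (fun n => norm_nonneg _) (fun n => ?_) ?_ (A.add B)
    · refine le_trans (qterm_norm_le k n (x n)) (weighted_le k n (norm_nonneg _) ?_)
      exact le_trans (lp.norm_apply_le_norm (hp_ne_zero (p := p)) x n) (le_trans hxs hs1.le)
    · refine lt_of_le_of_lt (qterm_norm_le k n0 (x n0))
        (weighted_lt k n0 (norm_pos_iff.2 hn0) ?_)
      exact lt_of_le_of_lt (le_trans (lp.norm_apply_le_norm (hp_ne_zero (p := p)) x n0) hxs) hs1
  exact lt_of_le_of_lt (norm_tsum_le_tsum_norm (qsummable hp hk x))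
    (lt_of_lt_of_le hlt (tsum_pow_bound hp hk x hxs))

private lemma qnorm_le_two (hp : p ≠ ⊤) {k : ℕ} (hk : p.toReal ≤ (k : ℝ))
    (x : lp (fun _ : ℕ => ℂ) p) (hxs : ‖x‖ ≤ 1) :
    ‖Qpoly p k x‖ ≤ 2 := by
  have A := (sum_pow_le hp hk x).1
  have A2 := (sum_pow_le hp hk x).2
  refine le_trans (norm_tsum_le_tsum_norm (qsummable hp hk x)) ?_
  have step : ∑' n : ℕ, ‖(1 - 1 / ((n : ℂ) + 1)) * (x n) ^ k +
      (1 + 1 / ((n : ℂ) + 1)) * (x n) ^ (k + 1)‖ ≤ ∑' n : ℕ, 2 * ‖x n‖ ^ k := by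
    refine Summable.tsum_le_tsum (fun n => ?_) (qsummable hp hk x) (A.mul_left 2)
    refine le_trans (qterm_norm_le k n (x n)) (weighted_le_two k n (norm_nonneg _) ?_)
    exact le_trans (lp.norm_apply_le_norm (hp_ne_zero (p := p)) x n) hxs
  refine le_trans step ?_
  rw [tsum_mul_left]
  have : ‖x‖ ^ k ≤ 1 := pow_le_one₀ (norm_nonneg x) hxs
  nlinarith

private lemma Q_single {k : ℕ} (hk0 : k ≠ 0) (i : ℕ) (c : ℂ) :
    Qpoly p k (lp.single p i c) =
      (1 - 1 / ((i : ℂ) + 1)) * c ^ k + (1 + 1 / ((i : ℂ) + 1)) * c ^ (k + 1) := by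
  unfold Qpoly
  rw [tsum_eq_single i ?_]
  · rw [lp.single_apply_self (E := fun _ : ℕ => ℂ)]
  · intro j hj
    rw [lp.single_apply_ne (E := fun _ : ℕ => ℂ) p i c hj, zero_pow hk0, zero_pow (Nat.succ_ne_zero k)]
    ring

private lemma norm_Q_single_real (hp : p ≠ ⊤) {k : ℕ} (hk0 : k ≠ 0) (i : ℕ) {s : ℝ}
    (hs : 0 ≤ s) :
    ‖Qpoly p k (lp.single (E := fun _ : ℕ => ℂ) p i ((s : ℂ)))‖ =
      (1 - 1 / ((i : ℝ) + 1)) * s ^ k + (1 + 1 / ((i : ℝ) + 1)) * s ^ (k + 1) := by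
  rw [Q_single hk0 i]
  have e : (1 - 1 / ((i : ℂ) + 1)) * (s : ℂ) ^ k + (1 + 1 / ((i : ℂ) + 1)) * (s : ℂ) ^ (k + 1) =
      (((1 - 1 / ((i : ℝ) + 1)) * s ^ k + (1 + 1 / ((i : ℝ) + 1)) * s ^ (k + 1) : ℝ) : ℂ) := by
    push_cast; ring
  rw [e, Complex.norm_real, Real.norm_eq_abs, abs_of_nonneg]
  exact add_nonneg (mul_nonneg (by linarith [eps_le_one i]) (pow_nonneg hs _))
    (mul_nonneg (by linarith [eps_pos i]) (pow_nonneg hs _))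

private lemma norm_single_eq (hp : p ≠ ⊤) (i : ℕ) (c : ℂ) :
    ‖lp.single (E := fun _ : ℕ => ℂ) p i c‖ = ‖c‖ :=
  lp.norm_single (E := fun _ : ℕ => ℂ) (lt_of_lt_of_le zero_lt_one (Fact.out : 1 ≤ p)) i c

private lemma weighted_tendsto (k : ℕ) (s : ℝ) :
    Tendsto (fun i : ℕ => (1 - 1 / ((i : ℝ) + 1)) * s ^ k +
      (1 + 1 / ((i : ℝ) + 1)) * s ^ (k + 1)) atTop (𝓝 (s ^ k + s ^ (k + 1))) := by
  have h0 : Tendsto (fun i : ℕ => 1 / ((i : ℝ) + 1)) atTop (𝓝 0) :=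
    tendsto_one_div_add_atTop_nhds_zero_nat
  have hc : Continuous (fun e : ℝ => (1 - e) * s ^ k + (1 + e) * s ^ (k + 1)) := by
    continuity
  have := (hc.tendsto 0).comp h0
  simp only [Function.comp_def] at this
  simpa using this

end Stmt10Aux

set_option maxHeartbeats 1000000

/-- `Q` attains its supremum norm (with value `2`, attained at `e₁`), but for
every `s ∈ (0,1)` its supremum over the ball of radius `s` is `s^k + s^{k+1}` and is never
attained; consequently `Q` does not attain its `v`-norm. The defining series converges
absolutely at every point. -/
theorem stmt10 (p : ℝ≥0∞) [Fact (1 ≤ p)] (hp : p ≠ ⊤) (k : ℕ) (hk : p.toReal ≤ (k : ℝ)) :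
    (∀ x : lp (fun _ : ℕ => ℂ) p,
      Summable (fun n : ℕ =>
        ‖(1 - 1 / ((n : ℂ) + 1)) * (x n) ^ k + (1 + 1 / ((n : ℂ) + 1)) * (x n) ^ (k + 1)‖)) ∧
    (sSup ((fun x : lp (fun _ : ℕ => ℂ) p => ‖Qpoly p k x‖) '' {x | ‖x‖ ≤ 1}) = 2 ∧
      ‖Qpoly p k (lp.single p 0 1)‖ = 2) ∧
    (∀ s : ℝ, 0 < s → s < 1 →
      sSup ((fun x : lp (fun _ : ℕ => ℂ) p => ‖Qpoly p k x‖) '' {x | ‖x‖ ≤ s}) =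
        s ^ k + s ^ (k + 1) ∧
      ∀ x : lp (fun _ : ℕ => ℂ) p, ‖x‖ ≤ s → ‖Qpoly p k x‖ < s ^ k + s ^ (k + 1)) ∧
    (∀ x : lp (fun _ : ℕ => ℂ) p, ‖x‖ ≤ 1 →
      (1 - ‖x‖ ^ 2) * ‖Qpoly p k x‖ < vNorm (Qpoly p k)) := by
  have hpr1 : (1 : ℝ) ≤ p.toReal := by
    have h := ENNReal.toReal_mono hp (Fact.out : 1 ≤ p)
    simpa using h
  have hk1 : 1 ≤ k := by exact_mod_cast le_trans hpr1 hk
  have hk0 : k ≠ 0 := Nat.one_le_iff_ne_zero.mp hk1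
  -- value at e₁
  have hQe1 : ‖Qpoly p k (lp.single p 0 (1 : ℂ))‖ = 2 := by
    rw [Q_single hk0 0]
    norm_num
  have hnorm_e1 : ‖lp.single (E := fun _ : ℕ => ℂ) p 0 (1 : ℂ)‖ = 1 := by
    rw [norm_single_eq hp]; simp
  -- strict bound for all x in ball s < 1
  have strict : ∀ s : ℝ, 0 < s → s < 1 → ∀ x : lp (fun _ : ℕ => ℂ) p, ‖x‖ ≤ s →
      ‖Qpoly p k x‖ < s ^ k + s ^ (k + 1) := by
    intro s hs0 hs1 x hxs
    rcases eq_or_ne x 0 with rfl | hx0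
    · have : Qpoly p k (0 : lp (fun _ : ℕ => ℂ) p) = 0 := by
        unfold Qpoly
        have hz : ∀ n : ℕ, ((0 : lp (fun _ : ℕ => ℂ) p) n) = 0 := fun n => rfl
        simp only [hz, zero_pow hk0, zero_pow (Nat.succ_ne_zero k), mul_zero, add_zero,
          tsum_zero]
      rw [this, norm_zero]
      positivity
    · exact qnorm_lt hp hk x hx0 hxs hs1
  refine ⟨fun x => qsummable hp hk x, ⟨?_, hQe1⟩, fun s hs0 hs1 => ⟨?_, strict s hs0 hs1⟩, ?_⟩
  · -- sSup over unit ball = 2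
    apply le_antisymm
    · refine csSup_le ⟨2, ⟨lp.single p 0 1, by simpa using hnorm_e1.le, hQe1⟩⟩ ?_
      rintro b ⟨x, hx, rfl⟩
      exact qnorm_le_two hp hk x hx
    · refine le_csSup ⟨2, ?_⟩ ⟨lp.single p 0 1, by simpa using hnorm_e1.le, hQe1⟩
      rintro b ⟨x, hx, rfl⟩
      exact qnorm_le_two hp hk x hx
  · -- sSup over ball s
    have hbdd : BddAbove ((fun x : lp (fun _ : ℕ => ℂ) p => ‖Qpoly p k x‖) '' {x | ‖x‖ ≤ s}) := by
      refine ⟨s ^ k + s ^ (k + 1), ?_⟩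
      rintro b ⟨x, hx, rfl⟩
      exact (strict s hs0 hs1 x hx).le
    apply le_antisymm
    · refine csSup_le ⟨‖Qpoly p k 0‖, ⟨0, by simp [hs0.le], rfl⟩⟩ ?_
      rintro b ⟨x, hx, rfl⟩
      exact (strict s hs0 hs1 x hx).le
    · refine le_of_tendsto (weighted_tendsto k s) (Filter.Eventually.of_forall fun i => ?_)
      refine le_csSup hbdd ⟨lp.single (E := fun _ : ℕ => ℂ) p i ((s : ℂ)), ?_, ?_⟩
      · show ‖lp.single (E := fun _ : ℕ => ℂ) p i ((s : ℂ))‖ ≤ s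
        rw [norm_single_eq hp, Complex.norm_real, Real.norm_eq_abs, abs_of_nonneg hs0.le]
      · exact norm_Q_single_real hp hk0 i hs0.le
  · -- v-norm part
    have hbddV : BddAbove ((fun x : lp (fun _ : ℕ => ℂ) p =>
        (1 - ‖x‖ ^ 2) * ‖Qpoly p k x‖) '' {x | ‖x‖ < 1}) := by
      refine ⟨2, ?_⟩
      rintro b ⟨y, hy, rfl⟩
      have h1 : (0 : ℝ) ≤ 1 - ‖y‖ ^ 2 := by
        have : ‖y‖ ^ 2 ≤ 1 := pow_le_one₀ (norm_nonneg y) hy.le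
        linarith
      have h2 : ‖Qpoly p k y‖ ≤ 2 := qnorm_le_two hp hk y hy.le
      calc (1 - ‖y‖ ^ 2) * ‖Qpoly p k y‖ ≤ 1 * 2 :=
            mul_le_mul (by nlinarith [sq_nonneg ‖y‖]) h2 (norm_nonneg _) zero_le_one
        _ = 2 := by ring
    have hlow : ∀ s : ℝ, 0 < s → s < 1 →
        (1 - s ^ 2) * (s ^ k + s ^ (k + 1)) ≤ vNorm (Qpoly p k) := by
      intro s hs0 hs1
      have htd : Tendsto (fun i : ℕ => (1 - s ^ 2) * ((1 - 1 / ((i : ℝ) + 1)) * s ^ k +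
          (1 + 1 / ((i : ℝ) + 1)) * s ^ (k + 1))) atTop
          (𝓝 ((1 - s ^ 2) * (s ^ k + s ^ (k + 1)))) :=
        (weighted_tendsto k s).const_mul _
      refine le_of_tendsto htd (Filter.Eventually.of_forall fun i => ?_)
      refine le_csSup hbddV ⟨lp.single (E := fun _ : ℕ => ℂ) p i ((s : ℂ)), ?_, ?_⟩
      · show ‖lp.single (E := fun _ : ℕ => ℂ) p i ((s : ℂ))‖ < 1
        rw [norm_single_eq hp, Complex.norm_real, Real.norm_eq_abs, abs_of_nonneg hs0.le]
        exact hs1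
      · have hns : ‖lp.single (E := fun _ : ℕ => ℂ) p i ((s : ℂ))‖ = s := by
          rw [norm_single_eq hp, Complex.norm_real, Real.norm_eq_abs, abs_of_nonneg hs0.le]
        beta_reduce
        rw [hns, norm_Q_single_real hp hk0 i hs0.le]
    have hVpos : 0 < vNorm (Qpoly p k) := by
      have := hlow (1 / 2) (by norm_num) (by norm_num)
      have hpos : (0 : ℝ) < (1 - (1 / 2 : ℝ) ^ 2) * ((1 / 2 : ℝ) ^ k + (1 / 2 : ℝ) ^ (k + 1)) := by
        positivity
      linarith
    intro x hx1
    rcases eq_or_lt_of_le hx1 with hx | hx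
    · rw [hx]
      simpa using hVpos
    · rcases eq_or_ne x 0 with rfl | hx0
      · have : Qpoly p k (0 : lp (fun _ : ℕ => ℂ) p) = 0 := by
          unfold Qpoly
          have hz : ∀ n : ℕ, ((0 : lp (fun _ : ℕ => ℂ) p) n) = 0 := fun n => rfl
          simp only [hz, zero_pow hk0, zero_pow (Nat.succ_ne_zero k), mul_zero, add_zero,
            tsum_zero]
        rw [this]
        simpa using hVpos
      · set s := ‖x‖ with hs
        have hs0 : 0 < s := norm_pos_iff.2 hx0
        have hQlt : ‖Qpoly p k x‖ < s ^ k + s ^ (k + 1) := qnorm_lt hp hk x hx0 le_rfl hx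
        have hfac : 0 < 1 - s ^ 2 := by nlinarith
        calc (1 - s ^ 2) * ‖Qpoly p k x‖ < (1 - s ^ 2) * (s ^ k + s ^ (k + 1)) :=
              mul_lt_mul_of_pos_left hQlt hfac
          _ ≤ vNorm (Qpoly p k) := hlow s hs0 hx
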